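/- arXiv:2407.08404 — 6 statements merged into one kernel-verified Lean document; each statement's English description precedes it below -/
import Mathlib

section
/- Let X be a nonempty compact subset of ℝ^d, let S_1, …, S_N : X → X (N ≥ 1) be contraction maps, and let C ⊆ X be compact. Then the inhomogeneous attractor satisfies F_C = F_∅ ∪ O, where F_∅ is the homogeneous attractor of the IFS and O is the orbital set. -/
/-- The inhomogeneous attractor decomposes as `F_C = F_∅ ∪ O`, where `F_∅` is the
homogeneous attractor and `O` is the orbital set
`O = C ∪ ⋃_{k ≥ 1} ⋃_{i₁,…,i_k} S_{i₁} ∘ ⋯ ∘ S_{i_k} (C)`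
(finite nonempty words are encoded as nonempty lists over `Fin N`, and a word
`w = [i₁, …, i_k]` acts by `S_{i₁} ∘ ⋯ ∘ S_{i_k}`). -/
theorem inhomogeneous_attractor_eq_homogeneous_union_orbital
    {d : ℕ} (X : Set (EuclideanSpace ℝ (Fin d))) (hXcomp : IsCompact X) (hXne : X.Nonempty)
    (N : ℕ) (hN : 1 ≤ N)
    (S : Fin N → EuclideanSpace ℝ (Fin d) → EuclideanSpace ℝ (Fin d))
    (hS : ∀ i, Set.MapsTo (S i) X X)
    (hcontr : ∀ i, ∃ c : ℝ, 0 < c ∧ c < 1 ∧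
      ∀ x ∈ X, ∀ y ∈ X, dist (S i x) (S i y) ≤ c * dist x y)
    (C : Set (EuclideanSpace ℝ (Fin d))) (hC : IsCompact C) (hCX : C ⊆ X)
    (FC : Set (EuclideanSpace ℝ (Fin d)))
    (hFC : FC.Nonempty ∧ IsCompact FC ∧ FC ⊆ X ∧ FC = (⋃ i, S i '' FC) ∪ C)
    (Fe : Set (EuclideanSpace ℝ (Fin d)))
    (hFe : Fe.Nonempty ∧ IsCompact Fe ∧ Fe ⊆ X ∧ Fe = ⋃ i, S i '' Fe) :
    FC = Fe ∪ (C ∪ ⋃ w ∈ {w : List (Fin N) | w ≠ []},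
      (w.foldr (fun i f => S i ∘ f) id) '' C) := by
  classical
  obtain ⟨hFCne, hFCcomp, hFCX, hFCeq⟩ := hFC
  obtain ⟨hFene, hFecomp, hFeX, hFeeq⟩ := hFe
  set F : List (Fin N) → EuclideanSpace ℝ (Fin d) → EuclideanSpace ℝ (Fin d) :=
    fun w => w.foldr (fun i f => S i ∘ f) id with hFdef
  choose cc hcc0 hcc1 hccd using hcontr
  haveI : Nonempty (Fin N) := ⟨⟨0, hN⟩⟩
  set c : ℝ := Finset.univ.sup' Finset.univ_nonempty cc with hc
  have hcle : ∀ i, cc i ≤ c := fun i => Finset.le_sup' cc (Finset.mem_univ i)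
  have hc0 : 0 ≤ c := le_trans (hcc0 ⟨0, hN⟩).le (hcle _)
  have hc1 : c < 1 := by
    rw [hc, Finset.sup'_lt_iff]; intro i _; exact hcc1 i
  -- words map X to X
  have hFX : ∀ w : List (Fin N), Set.MapsTo (F w) X X := by
    intro w; induction w with
    | nil => exact Set.mapsTo_id X
    | cons i w ih => exact (hS i).comp ih
  -- words are contractions with ratio c^len
  have hFdist : ∀ (w : List (Fin N)), ∀ y ∈ X, ∀ z ∈ X,
      dist (F w y) (F w z) ≤ c ^ w.length * dist y z := by
    intro w; induction w with
    | nil =>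
      intro y _ z _
      simp only [List.length_nil, pow_zero, one_mul]
      exact le_refl (dist y z)
    | cons i w ih =>
      intro y hy z hz
      calc dist (F (i :: w) y) (F (i :: w) z) ≤ cc i * dist (F w y) (F w z) :=
            hccd i _ (hFX w hy) _ (hFX w hz)
        _ ≤ c * (c ^ w.length * dist y z) :=
            mul_le_mul (hcle i) (ih y hy z hz)
              dist_nonneg hc0
        _ = c ^ (i :: w).length * dist y z := by
            simp [List.length_cons, pow_succ]; ring
  -- diameter bound
  set D : ℝ := Metric.diam X with hD
  have hdistD : ∀ y ∈ X, ∀ z ∈ X, dist y z ≤ D :=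
    fun y hy z hz => Metric.dist_le_diam_of_mem hXcomp.isBounded hy hz
  have htend : Filter.Tendsto (fun n : ℕ => c ^ n * D) Filter.atTop (nhds 0) := by
    simpa using (tendsto_pow_atTop_nhds_zero_of_lt_one hc0 hc1).mul_const D
  -- invariance of sets under words
  have hword : ∀ (B : Set (EuclideanSpace ℝ (Fin d))),
      (∀ i, Set.MapsTo (S i) B B) → ∀ w, Set.MapsTo (F w) B B := by
    intro B hB w; induction w with
    | nil => exact Set.mapsTo_id B
    | cons i w ih => exact (hB i).comp ih
  have hSFC : ∀ i, Set.MapsTo (S i) FC FC := by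
    intro i x hx
    have : S i x ∈ ⋃ j, S j '' FC := Set.mem_iUnion.mpr ⟨i, Set.mem_image_of_mem _ hx⟩
    rw [hFCeq]; exact Set.mem_union_left _ this
  have hSFe : ∀ i, Set.MapsTo (S i) Fe Fe := by
    intro i x hx
    rw [hFeeq]; exact Set.mem_iUnion.mpr ⟨i, Set.mem_image_of_mem _ hx⟩
  -- key limit lemma
  have key : ∀ (B : Set (EuclideanSpace ℝ (Fin d))), B.Nonempty → IsCompact B → B ⊆ X →
      (∀ i, Set.MapsTo (S i) B B) →
      ∀ x, (∀ n : ℕ, ∃ w : List (Fin N), w.length = n ∧ x ∈ F w '' X) → x ∈ B := by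
    intro B hBne hBcomp hBX hSB x hx
    obtain ⟨z, hz⟩ := hBne
    have hzX := hBX hz
    rw [← hBcomp.isClosed.closure_eq]
    rw [Metric.mem_closure_iff]
    intro ε hε
    obtain ⟨n, hn⟩ := (htend.eventually (eventually_lt_nhds hε)).exists
    obtain ⟨w, hwl, y, hyX, hxy⟩ := hx n
    refine ⟨F w z, hword B hSB w hz, ?_⟩
    calc dist x (F w z) = dist (F w y) (F w z) := by rw [hxy]
      _ ≤ c ^ w.length * dist y z := hFdist w y hyX z hzX
      _ ≤ c ^ n * D := by
          rw [hwl]; exact mul_le_mul_of_nonneg_left (hdistD y hyX z hzX) (pow_nonneg hc0 n)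
      _ < ε := hn
  -- F applied to appended word
  have happ : ∀ (w : List (Fin N)) (i : Fin N) (y : EuclideanSpace ℝ (Fin d)),
      F (w ++ [i]) y = F w (S i y) := by
    intro w i y
    induction w with
    | nil => rfl
    | cons j w ih => simp only [List.cons_append]; show S j (F (w ++ [i]) y) = S j (F w (S i y)); rw [ih]
  -- orbital set
  set O : Set (EuclideanSpace ℝ (Fin d)) :=
    C ∪ ⋃ w ∈ {w : List (Fin N) | w ≠ []}, F w '' C with hO
  -- iteration decomposition
  have hiter : ∀ x ∈ FC, ∀ n : ℕ,
      (∃ w : List (Fin N), w.length = n ∧ x ∈ F w '' FC) ∨ x ∈ O := by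
    intro x hx n
    induction n with
    | zero => exact Or.inl ⟨[], rfl, x, hx, rfl⟩
    | succ n ih =>
      rcases ih with ⟨w, hwl, y, hyFC, hxy⟩ | hOx
      · have hy' : y ∈ (⋃ i, S i '' FC) ∪ C := hFCeq ▸ hyFC
        rcases hy' with hy' | hyC
        · obtain ⟨i, hi⟩ := Set.mem_iUnion.mp hy'
          obtain ⟨y', hy'2, hyy'⟩ := hi
          refine Or.inl ⟨w ++ [i], by simp [hwl], y', hy'2, ?_⟩
          rw [happ w i y', hyy']; exact hxy
        · rcases eq_or_ne w [] with rfl | hwne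
          · refine Or.inr (Set.mem_union_left _ ?_)
            simpa using hxy ▸ hyC
          · refine Or.inr (Set.mem_union_right _ ?_)
            exact Set.mem_biUnion hwne ⟨y, hyC, hxy⟩
      · exact Or.inr hOx
  -- iteration for Fe
  have hiterFe : ∀ x ∈ Fe, ∀ n : ℕ,
      ∃ w : List (Fin N), w.length = n ∧ x ∈ F w '' Fe := by
    intro x hx n
    induction n with
    | zero => exact ⟨[], rfl, x, hx, rfl⟩
    | succ n ih =>
      obtain ⟨w, hwl, y, hyFe, hxy⟩ := ih
      have hy' : y ∈ ⋃ i, S i '' Fe := hFeeq ▸ hyFe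
      obtain ⟨i, hi⟩ := Set.mem_iUnion.mp hy'
      obtain ⟨y', hy', hyy'⟩ := hi
      refine ⟨w ++ [i], by simp [hwl], y', hy', ?_⟩
      rw [happ w i y', hyy']; exact hxy
  apply Set.Subset.antisymm
  · intro x hx
    by_cases hOx : x ∈ O
    · exact Set.mem_union_right _ hOx
    · left
      refine key Fe hFene hFecomp hFeX hSFe x ?_
      intro n
      rcases hiter x hx n with ⟨w, hwl, hxw⟩ | hOx'
      · exact ⟨w, hwl, Set.image_mono (f := F w) hFCX hxw⟩
      · exact absurd hOx' hOx
  · rintro x (hx | hx | hx)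
    · refine key FC hFCne hFCcomp hFCX hSFC x ?_
      intro n
      obtain ⟨w, hwl, hxw⟩ := hiterFe x hx n
      exact ⟨w, hwl, Set.image_mono (f := F w) hFeX hxw⟩
    · rw [hFCeq]; exact Set.mem_union_right _ hx
    · obtain ⟨w, hw⟩ := Set.mem_iUnion.mp hx
      obtain ⟨hw1, hw2⟩ := Set.mem_iUnion.mp hw
      obtain ⟨y, hyC, hyy⟩ := hw2
      rw [← hyy]
      exact hword FC hSFC w (hFCeq ▸ Set.mem_union_right _ hyC)
end

section
/- Let X be a nonempty compact subset of ℝ^d, let S_1, …, S_N : X → X (N ≥ 1) be contraction maps, and let C ⊆ X be compact and nonempty. Then the inhomogeneous attractor F_C equals the closure of the orbital set O. -/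
/-- For a nonempty compact condensation set `C`, the inhomogeneous attractor `F_C`
equals the closure of the orbital set
`O = C ∪ ⋃_{k ≥ 1} ⋃_{i₁,…,i_k} S_{i₁} ∘ ⋯ ∘ S_{i_k} (C)`
(finite nonempty words are encoded as nonempty lists over `Fin N`, and a word
`w = [i₁, …, i_k]` acts by `S_{i₁} ∘ ⋯ ∘ S_{i_k}`). -/
theorem inhomogeneous_attractor_eq_closure_orbital
    {d : ℕ} (X : Set (EuclideanSpace ℝ (Fin d))) (hXcomp : IsCompact X) (hXne : X.Nonempty)
    (N : ℕ) (hN : 1 ≤ N)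
    (S : Fin N → EuclideanSpace ℝ (Fin d) → EuclideanSpace ℝ (Fin d))
    (hS : ∀ i, Set.MapsTo (S i) X X)
    (hcontr : ∀ i, ∃ c : ℝ, 0 < c ∧ c < 1 ∧
      ∀ x ∈ X, ∀ y ∈ X, dist (S i x) (S i y) ≤ c * dist x y)
    (C : Set (EuclideanSpace ℝ (Fin d))) (hC : IsCompact C) (hCX : C ⊆ X) (hCne : C.Nonempty)
    (FC : Set (EuclideanSpace ℝ (Fin d)))
    (hFC : FC.Nonempty ∧ IsCompact FC ∧ FC ⊆ X ∧ FC = (⋃ i, S i '' FC) ∪ C) :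
    FC = closure (C ∪ ⋃ w ∈ {w : List (Fin N) | w ≠ []},
      (w.foldr (fun i f => S i ∘ f) id) '' C) := by
  obtain ⟨hFCne, hFCcomp, hFCX, hFCeq⟩ := hFC
  set Φ : List (Fin N) → EuclideanSpace ℝ (Fin d) → EuclideanSpace ℝ (Fin d) :=
    fun w => w.foldr (fun i f => S i ∘ f) id with hΦ
  set O : Set (EuclideanSpace ℝ (Fin d)) :=
    C ∪ ⋃ w ∈ {w : List (Fin N) | w ≠ []}, Φ w '' C with hO
  haveI : Nonempty (Fin N) := ⟨⟨0, hN⟩⟩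
  -- basic facts about FC
  have hCFC : C ⊆ FC := by
    intro x hx; rw [hFCeq]; exact Or.inr hx
  have hSiFC : ∀ i, S i '' FC ⊆ FC := by
    intro i x hx; rw [hFCeq]
    exact Or.inl (Set.mem_iUnion.2 ⟨i, hx⟩)
  -- Φ maps X to X
  have hΦX : ∀ w : List (Fin N), Set.MapsTo (Φ w) X X := by
    intro w
    induction w with
    | nil => exact fun x hx => hx
    | cons i t ih => exact (hS i).comp ih
  -- Φ w '' C ⊆ FC
  have hΦFC : ∀ w : List (Fin N), Φ w '' C ⊆ FC := by
    intro w
    induction w with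
    | nil => simpa [hΦ] using hCFC
    | cons i t ih =>
      have h1 : Φ (i :: t) '' C = S i '' (Φ t '' C) := Set.image_comp (S i) (Φ t) C
      rw [h1]
      exact (Set.image_mono ih).trans (hSiFC i)
  -- O ⊆ X and O ⊆ FC
  have hOX : O ⊆ X := by
    intro x hx
    rcases hx with hx | hx
    · exact hCX hx
    · rw [Set.mem_iUnion₂] at hx
      obtain ⟨w, _, hw⟩ := hx
      exact ((hΦX w).mono_left hCX).image_subset hw
  have hOFC : O ⊆ FC := by
    intro x hx
    rcases hx with hx | hx
    · exact hCFC hx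
    · rw [Set.mem_iUnion₂] at hx
      obtain ⟨w, _, hw⟩ := hx
      exact hΦFC w hw
  -- O is closed under each S i
  have hSO : ∀ i, ∀ z ∈ O, S i z ∈ O := by
    intro i z hz
    rcases hz with hz | hz
    · refine Or.inr (Set.mem_biUnion (show ([i] : List (Fin N)) ∈ {w : List (Fin N) | w ≠ []} by simp) ?_)
      exact ⟨z, hz, rfl⟩
    · rw [Set.mem_iUnion₂] at hz
      obtain ⟨w, _, x, hx, hxz⟩ := hz
      refine Or.inr (Set.mem_biUnion (show (i :: w : List (Fin N)) ∈ {w : List (Fin N) | w ≠ []} by simp) ?_)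
      refine ⟨x, hx, ?_⟩
      show S i (Φ w x) = S i z
      rw [hxz]
  -- uniform contraction ratio
  choose c hc0 hc1 hcd using hcontr
  set r : ℝ := Finset.univ.sup' Finset.univ_nonempty c with hr
  have hcr : ∀ i, c i ≤ r := fun i => Finset.le_sup' c (Finset.mem_univ i)
  have hr0 : 0 < r := lt_of_lt_of_le (hc0 ⟨0, hN⟩) (hcr ⟨0, hN⟩)
  have hr1 : r < 1 := (Finset.sup'_lt_iff Finset.univ_nonempty).2 fun i _ => hc1 i
  -- key approximation lemma
  have key : ∀ n : ℕ, ∀ x ∈ FC, ∃ z ∈ O, dist x z ≤ r ^ n * Metric.diam X := by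
    intro n
    induction n with
    | zero =>
      intro x hx
      obtain ⟨z, hz⟩ := hCne
      refine ⟨z, Or.inl hz, ?_⟩
      simpa using Metric.dist_le_diam_of_mem hXcomp.isBounded (hFCX hx) (hCX hz)
    | succ n ih =>
      intro x hx
      have hx' : x ∈ (⋃ i, S i '' FC) ∪ C := hFCeq ▸ hx
      rcases hx' with hx' | hx'
      · rw [Set.mem_iUnion] at hx'
        obtain ⟨i, y, hy, hxy⟩ := hx'
        obtain ⟨z, hzO, hdz⟩ := ih y hy
        refine ⟨S i z, hSO i z hzO, ?_⟩
        calc dist x (S i z) = dist (S i y) (S i z) := by rw [hxy]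
          _ ≤ c i * dist y z := hcd i y (hFCX hy) z (hOX hzO)
          _ ≤ r * (r ^ n * Metric.diam X) :=
              mul_le_mul (hcr i) hdz dist_nonneg (le_of_lt hr0)
          _ = r ^ (n + 1) * Metric.diam X := by ring
      · exact ⟨x, Or.inl hx', by simp [mul_nonneg (pow_nonneg (le_of_lt hr0) _) Metric.diam_nonneg]⟩
  apply le_antisymm
  · -- FC ⊆ closure O
    intro x hx
    rw [Metric.mem_closure_iff]
    intro ε hε
    have htend : Filter.Tendsto (fun n : ℕ => r ^ n * Metric.diam X) Filter.atTop (nhds 0) := by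
      have := tendsto_pow_atTop_nhds_zero_of_lt_one (le_of_lt hr0) hr1
      simpa using this.mul_const (Metric.diam X)
    obtain ⟨n, hn⟩ := (htend.eventually (eventually_lt_nhds hε)).exists
    obtain ⟨z, hzO, hdz⟩ := key n x hx
    exact ⟨z, hzO, lt_of_le_of_lt hdz hn⟩
  · -- closure O ⊆ FC
    exact closure_minimal hOFC hFCcomp.isClosed
end

section
/- Let X be a nonempty compact subset of ℝ^d, let S_1, …, S_N : X → X (N ≥ 1) be contraction maps, and let C ⊆ X be compact. Then the Hausdorff dimension of the inhomogeneous attractor satisfies dim_H F_C = max{dim_H F_∅, dim_H C}, where F_∅ is the homogeneous attractor of the IFS. -/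
/-- The Hausdorff dimension of the inhomogeneous attractor satisfies
`dim_H F_C = max {dim_H F_∅, dim_H C}`, where `F_∅` is the homogeneous attractor of the IFS. -/
theorem dimH_inhomogeneous_attractor
    {d : ℕ} (X : Set (EuclideanSpace ℝ (Fin d))) (hXcomp : IsCompact X) (hXne : X.Nonempty)
    (N : ℕ) (hN : 1 ≤ N)
    (S : Fin N → EuclideanSpace ℝ (Fin d) → EuclideanSpace ℝ (Fin d))
    (hS : ∀ i, Set.MapsTo (S i) X X)
    (hcontr : ∀ i, ∃ c : ℝ, 0 < c ∧ c < 1 ∧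
      ∀ x ∈ X, ∀ y ∈ X, dist (S i x) (S i y) ≤ c * dist x y)
    (C : Set (EuclideanSpace ℝ (Fin d))) (hC : IsCompact C) (hCX : C ⊆ X)
    (FC : Set (EuclideanSpace ℝ (Fin d)))
    (hFC : FC.Nonempty ∧ IsCompact FC ∧ FC ⊆ X ∧ FC = (⋃ i, S i '' FC) ∪ C)
    (Fe : Set (EuclideanSpace ℝ (Fin d)))
    (hFe : Fe.Nonempty ∧ IsCompact Fe ∧ Fe ⊆ X ∧ Fe = ⋃ i, S i '' Fe) :
    dimH FC = max (dimH Fe) (dimH C) := by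
  obtain ⟨hFCne, hFCcomp, hFCX, hFCeq⟩ := hFC
  obtain ⟨hFene, hFecomp, hFeX, hFeeq⟩ := hFe
  -- a uniform contraction ratio
  choose cf hcf0 hcf1 hcfd using hcontr
  have hNne : Nonempty (Fin N) := ⟨⟨0, hN⟩⟩
  set c : ℝ := Finset.univ.sup' (Finset.univ_nonempty) cf with hc
  have hc0 : 0 < c := by
    obtain ⟨i⟩ := hNne
    exact lt_of_lt_of_le (hcf0 i) (Finset.le_sup' cf (Finset.mem_univ i))
  have hc1 : c < 1 := by
    rw [hc, Finset.sup'_lt_iff]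
    exact fun i _ => hcf1 i
  have hcd : ∀ i, ∀ x ∈ X, ∀ y ∈ X, dist (S i x) (S i y) ≤ c * dist x y := by
    intro i x hx y hy
    exact le_trans (hcfd i x hx y hy)
      (mul_le_mul_of_nonneg_right (Finset.le_sup' cf (Finset.mem_univ i)) dist_nonneg)
  -- composition along words
  set Sw : List (Fin N) → EuclideanSpace ℝ (Fin d) → EuclideanSpace ℝ (Fin d) :=
    fun w => w.foldr (fun i f => S i ∘ f) id with hSw
  have Sw_nil : Sw [] = id := rfl
  have Sw_cons : ∀ i w, Sw (i :: w) = S i ∘ Sw w := fun i w => rfl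
  have Sw_maps : ∀ w, Set.MapsTo (Sw w) X X := by
    intro w
    induction w with
    | nil => exact Set.mapsTo_id X
    | cons i w ih => exact (hS i).comp ih
  have Sw_dist : ∀ w, ∀ x ∈ X, ∀ y ∈ X,
      dist (Sw w x) (Sw w y) ≤ c ^ w.length * dist x y := by
    intro w
    induction w with
    | nil => intro x _ y _; simp [Sw_nil]
    | cons i w ih =>
      intro x hx y hy
      calc dist (S i (Sw w x)) (S i (Sw w y)) ≤ c * dist (Sw w x) (Sw w y) :=
            hcd i _ (Sw_maps w hx) _ (Sw_maps w hy)
        _ ≤ c * (c ^ w.length * dist x y) :=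
            mul_le_mul_of_nonneg_left (ih x hx y hy) hc0.le
        _ = c ^ (i :: w).length * dist x y := by
            rw [List.length_cons, pow_succ]; ring
  -- invariance
  have hSFC : ∀ i, S i '' FC ⊆ FC := by
    intro i x hx
    rw [hFCeq]
    exact Or.inl (Set.mem_iUnion.2 ⟨i, hx⟩)
  have hCFC : C ⊆ FC := by
    intro x hx; rw [hFCeq]; exact Or.inr hx
  have hSFe : ∀ i, S i '' Fe ⊆ Fe := by
    intro i x hx
    rw [hFeeq]
    exact Set.mem_iUnion.2 ⟨i, hx⟩
  have Sw_append : ∀ w (i : Fin N), Sw (w ++ [i]) = Sw w ∘ S i := by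
    intro w i
    induction w with
    | nil => rfl
    | cons j w ih =>
      show S j ∘ Sw (w ++ [i]) = (S j ∘ Sw w) ∘ S i
      rw [ih]; rfl
  have SwFC : ∀ w, Sw w '' FC ⊆ FC := by
    intro w
    induction w with
    | nil => simp [Sw_nil]
    | cons i w ih =>
      rw [Sw_cons, Set.image_comp]
      exact (Set.image_mono ih).trans (hSFC i)
  have SwFe : ∀ w, Sw w '' Fe ⊆ Fe := by
    intro w
    induction w with
    | nil => simp [Sw_nil]
    | cons i w ih =>
      rw [Sw_cons, Set.image_comp]
      exact (Set.image_mono ih).trans (hSFe i)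
  -- diameter bound and limit argument
  set D : ℝ := Metric.diam X with hD
  have hclose : ∀ (K : Set (EuclideanSpace ℝ (Fin d))), K.Nonempty → IsCompact K → K ⊆ X →
      ∀ x, (∀ n : ℕ, ∃ y ∈ K, dist x y ≤ c ^ n * D) → x ∈ K := by
    intro K hKne hKcomp hKX x hx
    have h0 : Metric.infDist x K ≤ 0 := by
      have htend : Filter.Tendsto (fun n : ℕ => c ^ n * D) Filter.atTop (nhds 0) := by
        simpa using (tendsto_pow_atTop_nhds_zero_of_lt_one hc0.le hc1).mul_const D
      refine ge_of_tendsto' htend fun n => ?_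
      obtain ⟨y, hy, hxy⟩ := hx n
      exact (Metric.infDist_le_dist_of_mem hy).trans hxy
    have : Metric.infDist x K = 0 := le_antisymm h0 Metric.infDist_nonneg
    have hx' : x ∈ closure K := (Metric.mem_closure_iff_infDist_zero hKne).2 this
    rwa [hKcomp.isClosed.closure_eq] at hx'
  -- Fe ⊆ FC
  have hFeFC : Fe ⊆ FC := by
    intro x hx
    have key : ∀ n : ℕ, ∃ w : List (Fin N), w.length = n ∧ x ∈ Sw w '' Fe := by
      intro n
      induction n with
      | zero => exact ⟨[], rfl, x, hx, rfl⟩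
      | succ n ih =>
        obtain ⟨w, hwlen, y, hy, hxy⟩ := ih
        rw [hFeeq] at hy
        obtain ⟨i, z, hz, hzy⟩ := by simpa using hy
        refine ⟨w ++ [i], by simp [hwlen], z, hz, ?_⟩
        rw [Sw_append]
        simp only [Function.comp_apply, hzy, hxy]
    obtain ⟨z0, hz0⟩ := id hFCne
    refine hclose FC hFCne hFCcomp hFCX x fun n => ?_
    obtain ⟨w, hwlen, y, hy, hxy⟩ := key n
    refine ⟨Sw w z0, SwFC w (Set.mem_image_of_mem _ hz0), ?_⟩
    rw [← hxy]
    calc dist (Sw w y) (Sw w z0) ≤ c ^ w.length * dist y z0 :=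
          Sw_dist w y (hFeX hy) z0 (hFCX hz0)
      _ ≤ c ^ n * D := by
          rw [hwlen]
          exact mul_le_mul_of_nonneg_left
            (Metric.dist_le_diam_of_mem hXcomp.isBounded (hFeX hy) (hFCX hz0))
            (pow_nonneg hc0.le n)
  -- FC ⊆ Fe ∪ ⋃ words, Sw w '' C
  have hFCsub : FC ⊆ Fe ∪ ⋃ w : List (Fin N), Sw w '' C := by
    intro x hx
    by_cases hxC : x ∈ ⋃ w : List (Fin N), Sw w '' C
    · exact Or.inr hxC
    · left
      have key : ∀ n : ℕ, ∃ w : List (Fin N), w.length = n ∧ x ∈ Sw w '' FC := by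
        intro n
        induction n with
        | zero => exact ⟨[], rfl, x, hx, rfl⟩
        | succ n ih =>
          obtain ⟨w, hwlen, y, hy, hxy⟩ := ih
          rw [hFCeq] at hy
          rcases hy with hy | hy
          · obtain ⟨i, z, hz, hzy⟩ := by simpa using hy
            refine ⟨w ++ [i], by simp [hwlen], z, hz, ?_⟩
            rw [Sw_append]
            simp only [Function.comp_apply, hzy, hxy]
          · exact absurd (Set.mem_iUnion.2 ⟨w, (Set.mem_image _ _ _).2 ⟨y, hy, hxy⟩⟩) hxC
      obtain ⟨z0, hz0⟩ := id hFene
      refine hclose Fe hFene hFecomp hFeX x fun n => ?_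
      obtain ⟨w, hwlen, y, hy, hxy⟩ := key n
      refine ⟨Sw w z0, SwFe w (Set.mem_image_of_mem _ hz0), ?_⟩
      rw [← hxy]
      calc dist (Sw w y) (Sw w z0) ≤ c ^ w.length * dist y z0 :=
            Sw_dist w y (hFCX hy) z0 (hFeX hz0)
        _ ≤ c ^ n * D := by
            rw [hwlen]
            exact mul_le_mul_of_nonneg_left
              (Metric.dist_le_diam_of_mem hXcomp.isBounded (hFCX hy) (hFeX hz0))
              (pow_nonneg hc0.le n)
  -- Lipschitz of Sw on X
  have SwLip : ∀ w, LipschitzOnWith 1 (Sw w) X := by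
    intro w
    refine LipschitzOnWith.mk_one fun x hx y hy => ?_
    refine (Sw_dist w x hx y hy).trans ?_
    have hpow : c ^ w.length ≤ 1 := pow_le_one₀ hc0.le hc1.le
    exact mul_le_of_le_one_left dist_nonneg hpow
  -- dimension computation
  apply le_antisymm
  · calc dimH FC ≤ dimH (Fe ∪ ⋃ w : List (Fin N), Sw w '' C) := dimH_mono hFCsub
      _ = max (dimH Fe) (dimH (⋃ w : List (Fin N), Sw w '' C)) := dimH_union _ _
      _ ≤ max (dimH Fe) (dimH C) := by
          refine max_le_max le_rfl ?_
          rw [dimH_iUnion]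
          exact iSup_le fun w => ((SwLip w).mono hCX).dimH_image_le
  · exact max_le (dimH_mono hFeFC) (dimH_mono hCFC)
end

section
/- Let λ ∈ (1/2, 1) be the reciprocal of a Garsia number. Then there exists a constant K > 0, depending only on λ, such that for every n ∈ ℕ and every pair of distinct words (i_1,…,i_n), (i'_1,…,i'_n) ∈ {1,2}^n, one has | (1−λ) Σ_{k=1}^n i_k λ^{k−1} − (1−λ) Σ_{k=1}^n i'_k λ^{k−1} | > K / 2^n. -/
/-- A Garsia number: a positive real algebraic integer whose minimal polynomial over `ℚ` has
constant term of absolute value `2` (i.e. it has norm `±2`), and all of whose complex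
conjugates (roots of its minimal polynomial) have modulus strictly greater than `1`. -/
def IsGarsiaNumber (a : ℝ) : Prop :=
  0 < a ∧ IsIntegral ℤ a ∧ |(minpoly ℚ a).coeff 0| = 2 ∧
    ∀ z : ℂ, Polynomial.aeval z (minpoly ℚ a) = 0 → 1 < ‖z‖

open Polynomial IntermediateField Finset


set_option maxHeartbeats 1000000 in
lemma garsia_aux (l : ℝ) (hl : l ∈ Set.Ioo (1/2 : ℝ) 1) (hg : IsGarsiaNumber l⁻¹) :
    ∃ C : ℝ, 0 < C ∧ ∀ M : ℕ, ∀ ε : ℕ → ℤ, (∀ k, |ε k| ≤ 1) → ε M ≠ 0 →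
      1 / (C * 2 ^ M) ≤ |∑ k ∈ range (M+1), (ε k : ℝ) * l ^ k| := by
  classical
  obtain ⟨hl0, hl1⟩ := hl
  have hlpos : 0 < l := by linarith
  obtain ⟨hβpos, hβint, hcoeff, hroots⟩ := hg
  have hβ1 : 1 < l⁻¹ := (one_lt_inv₀ hlpos).mpr hl1
  have hβQ : IsIntegral ℚ (l⁻¹ : ℝ) := hβint.tower_top
  haveI hfd : FiniteDimensional ℚ ℚ⟮(l⁻¹ : ℝ)⟯ := adjoin.finiteDimensional hβQ
  set g : ℚ⟮(l⁻¹ : ℝ)⟯ := AdjoinSimple.gen ℚ (l⁻¹ : ℝ) with hgdef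
  have hval : algebraMap ℚ⟮(l⁻¹ : ℝ)⟯ ℝ g = l⁻¹ := AdjoinSimple.algebraMap_gen ℚ (l⁻¹ : ℝ)
  have hg_int : IsIntegral ℤ g := by
    have := hβint
    rw [← hval] at this
    exact (isIntegral_algebraMap_iff (algebraMap ℚ⟮(l⁻¹ : ℝ)⟯ ℝ).injective).mp this
  -- every embedding sends g to a root of the minimal polynomial, of modulus > 1
  have hσroot : ∀ σ : ℚ⟮(l⁻¹ : ℝ)⟯ →ₐ[ℚ] ℂ, aeval (σ g) (minpoly ℚ (l⁻¹ : ℝ)) = 0 := by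
    intro σ
    rw [aeval_algHom_apply σ g (minpoly ℚ (l⁻¹ : ℝ)), hgdef]
    erw [aeval_gen_minpoly ℚ (l⁻¹ : ℝ), map_zero]
  have hσ1 : ∀ σ : ℚ⟮(l⁻¹ : ℝ)⟯ →ₐ[ℚ] ℂ, 1 < ‖σ g‖ := fun σ => hroots _ (hσroot σ)
  -- product of |σ g| over all embeddings is 2
  have hnormg : |Algebra.norm ℚ g| = 2 := by
    rw [show g = (adjoin.powerBasis hβQ).gen from (adjoin.powerBasis_gen hβQ).symm]
    have hpb := Algebra.PowerBasis.norm_gen_eq_coeff_zero_minpoly (adjoin.powerBasis hβQ)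
    rw [adjoin.powerBasis_gen hβQ, minpoly_gen ℚ (l⁻¹ : ℝ)] at hpb
    erw [adjoin.powerBasis_gen hβQ, hpb]
    rw [abs_mul, abs_pow, abs_neg, abs_one, one_pow, one_mul]
    exact_mod_cast hcoeff
  have hprodg : ∏ σ : ℚ⟮(l⁻¹ : ℝ)⟯ →ₐ[ℚ] ℂ, ‖σ g‖ = 2 := by
    have h := Algebra.norm_eq_prod_embeddings ℚ ℂ g
    have h2 : ‖algebraMap ℚ ℂ (Algebra.norm ℚ g)‖ = 2 := by
      rw [show (algebraMap ℚ ℂ) (Algebra.norm ℚ g) = (((Algebra.norm ℚ g : ℚ) : ℝ) : ℂ) by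
        rw [eq_ratCast]; norm_cast, Complex.norm_real, Real.norm_eq_abs]
      exact_mod_cast hnormg
    rw [h, norm_prod] at h2
    exact h2
  -- the distinguished real embedding
  set σ₀ : ℚ⟮(l⁻¹ : ℝ)⟯ →ₐ[ℚ] ℂ :=
    (Complex.ofRealAm.restrictScalars ℚ).comp (IntermediateField.val ℚ⟮(l⁻¹ : ℝ)⟯) with hσ₀def
  have hσ₀ : ∀ x : ℚ⟮(l⁻¹ : ℝ)⟯, σ₀ x = ((algebraMap ℚ⟮(l⁻¹ : ℝ)⟯ ℝ x : ℝ) : ℂ) := fun x => rfl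
  have hΦ₀ : ‖σ₀ g‖ = l⁻¹ := by
    rw [hσ₀, hval, Complex.norm_real, Real.norm_eq_abs, abs_of_pos hβpos]
  have hprod_erase : ∏ σ ∈ Finset.univ.erase σ₀, ‖σ g‖ = 2 * l := by
    have h := Finset.mul_prod_erase Finset.univ (fun σ : ℚ⟮(l⁻¹ : ℝ)⟯ →ₐ[ℚ] ℂ =>
      ‖σ g‖) (Finset.mem_univ σ₀)
    rw [hprodg] at h
    rw [hΦ₀] at h
    have h2 : l * (l⁻¹ * ∏ σ ∈ Finset.univ.erase σ₀, ‖σ g‖) = l * 2 := by rw [h]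
    rw [← mul_assoc, mul_inv_cancel₀ (ne_of_gt hlpos), one_mul] at h2
    linarith
  set C : ℝ := ∏ σ ∈ Finset.univ.erase σ₀,
      (‖σ g‖ / (‖σ g‖ - 1)) with hCdef
  have hC : 0 < C := by
    apply Finset.prod_pos
    intro σ _
    have := hσ1 σ
    apply div_pos <;> linarith
  refine ⟨C, hC, ?_⟩
  intro M ε hε hεM
  set R : Polynomial ℤ := ∑ k ∈ range (M+1), Polynomial.C (ε k) * Polynomial.X ^ (M-k) with hRdef
  have hev : ∀ (A : Type) (_ : CommRing A) (_ : Algebra ℤ A) (x : A),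
      aeval x R = ∑ k ∈ range (M+1), (ε k : A) * x ^ (M-k) := by
    intro A _ _ x
    rw [hRdef, map_sum]
    refine Finset.sum_congr rfl fun k _ => ?_
    simp
  have hcoeff0 : R.coeff 0 = ε M := by
    rw [hRdef, finset_sum_coeff]
    rw [Finset.sum_eq_single M]
    · simp
    · intro k hk hkM
      rw [coeff_C_mul, coeff_X_pow, if_neg (by simp at hk; omega), mul_zero]
    · intro h
      exact absurd (self_mem_range_succ M) h
  -- the evaluation at l⁻¹ is nonzero
  have haR : aeval (l⁻¹ : ℝ) R ≠ 0 := by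
    intro h0
    obtain ⟨S, hS⟩ := minpoly.isIntegrallyClosed_dvd hβint h0
    have h1 : (minpoly ℤ (l⁻¹ : ℝ)).coeff 0 * S.coeff 0 = ε M := by
      rw [← hcoeff0, hS, mul_coeff_zero]
    have h2 : |(minpoly ℤ (l⁻¹ : ℝ)).coeff 0| = 2 := by
      rw [minpoly.isIntegrallyClosed_eq_field_fractions' ℚ hβint, coeff_map,
        show (algebraMap ℤ ℚ) ((minpoly ℤ (l⁻¹:ℝ)).coeff 0)
          = (((minpoly ℤ (l⁻¹:ℝ)).coeff 0 : ℤ) : ℚ) from by simp] at hcoeff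
      exact_mod_cast hcoeff
    have h3 : (minpoly ℤ (l⁻¹ : ℝ)).coeff 0 ∣ ε M := Dvd.intro _ h1
    have h4 := Int.le_of_dvd (abs_pos.mpr hεM) ((abs_dvd _ _).mpr ((dvd_abs _ _).mpr h3))
    have h5 := hε M
    rw [h2] at h4
    linarith
  set A : ℚ⟮(l⁻¹ : ℝ)⟯ := aeval g R with hAdef
  have hmapA : algebraMap ℚ⟮(l⁻¹ : ℝ)⟯ ℝ A = aeval (l⁻¹ : ℝ) R := by
    have h := aeval_algebraMap_apply ℝ g R
    rw [hval] at h
    exact h.symm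
  have hA : A ≠ 0 := fun h => haR (by rw [← hmapA, h, map_zero])
  have hAint : IsIntegral ℤ A := by
    have hAmem : A ∈ integralClosure ℤ ℚ⟮(l⁻¹ : ℝ)⟯ := by
      rw [hAdef, hev _ inferInstance inferInstance g]
      refine Subalgebra.sum_mem _ fun k _ => Subalgebra.mul_mem _ ?_
        (Subalgebra.pow_mem _ hg_int _)
      exact Subalgebra.intCast_mem _ _
    exact hAmem
  obtain ⟨m, hm⟩ := IsIntegrallyClosed.isIntegral_iff.mp (Algebra.isIntegral_norm ℚ hAint)
  rw [show (algebraMap ℤ ℚ) m = ((m : ℚ)) from by simp] at hm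
  have hm0 : m ≠ 0 := by
    intro h
    have hnz : Algebra.norm ℚ A ≠ 0 := Algebra.norm_ne_zero_iff.mpr hA
    rw [← hm, h] at hnz
    exact hnz (by norm_num)
  have hprodA : (1 : ℝ) ≤ ∏ σ : ℚ⟮(l⁻¹ : ℝ)⟯ →ₐ[ℚ] ℂ, ‖σ A‖ := by
    have h := Algebra.norm_eq_prod_embeddings ℚ ℂ A
    rw [← norm_prod, ← h, ← hm]
    rw [show ((algebraMap ℚ ℂ) ((m : ℚ))) = ((m : ℝ) : ℂ) from by rw [eq_ratCast]; norm_cast,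
      Complex.norm_real, Real.norm_eq_abs]
    exact_mod_cast Int.one_le_abs hm0
  have hσA : ∀ σ : ℚ⟮(l⁻¹ : ℝ)⟯ →ₐ[ℚ] ℂ, σ A = aeval (σ g) R := by
    intro σ
    show σ.toRingHom (aeval g R) = _
    rw [aeval_def, aeval_def, hom_eval₂]
    congr 1
    exact Subsingleton.elim _ _
  -- bound each conjugate factor
  have hbnd : ∀ σ : ℚ⟮(l⁻¹ : ℝ)⟯ →ₐ[ℚ] ℂ, ‖σ A‖ ≤
      (‖σ g‖ / (‖σ g‖ - 1)) * ‖σ g‖ ^ M := by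
    intro σ
    set t : ℝ := ‖σ g‖ with htdef
    have ht : 1 < t := hσ1 σ
    have ht0 : 0 < t - 1 := by linarith
    rw [hσA σ, hev ℂ inferInstance inferInstance (σ g)]
    calc ‖∑ k ∈ range (M+1), (ε k : ℂ) * (σ g) ^ (M-k)‖
        ≤ ∑ k ∈ range (M+1), ‖(ε k : ℂ) * (σ g) ^ (M-k)‖ :=
          norm_sum_le _ _
      _ ≤ ∑ k ∈ range (M+1), t ^ (M-k) := by
          refine Finset.sum_le_sum fun k _ => ?_
          rw [norm_mul, norm_pow, Complex.norm_intCast, ← htdef]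
          have h1 : |(ε k : ℝ)| ≤ 1 := by exact_mod_cast hε k
          have h2 : (0:ℝ) ≤ t ^ (M-k) := by positivity
          nlinarith [abs_nonneg ((ε k : ℝ))]
      _ = ∑ k ∈ range (M+1), t ^ k := by
          rw [← Finset.sum_range_reflect (fun j => t ^ j) (M+1)]
          refine Finset.sum_congr rfl fun k hk => ?_
          simp only [Nat.add_sub_cancel]
      _ = (t ^ (M+1) - 1) / (t - 1) := geom_sum_eq (by linarith) (M+1)
      _ ≤ t ^ (M+1) / (t - 1) := div_le_div_of_nonneg_right (by linarith) ht0.le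
      _ = t / (t - 1) * t ^ M := by
          rw [pow_succ]
          ring
  -- put everything together
  have hσ₀A : ‖σ₀ A‖ = |aeval (l⁻¹ : ℝ) R| := by
    rw [hσ₀, Complex.norm_real, Real.norm_eq_abs, hmapA]
  have hrest : ∏ σ ∈ Finset.univ.erase σ₀, ‖σ A‖ ≤ C * (2 * l) ^ M := by
    calc ∏ σ ∈ Finset.univ.erase σ₀, ‖σ A‖
        ≤ ∏ σ ∈ Finset.univ.erase σ₀,
          ((‖σ g‖ / (‖σ g‖ - 1)) * ‖σ g‖ ^ M) :=
          Finset.prod_le_prod (fun σ _ => norm_nonneg _) (fun σ _ => hbnd σ)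
      _ = C * (2 * l) ^ M := by
          rw [Finset.prod_mul_distrib, Finset.prod_pow, hprod_erase, ← hCdef]
  have hkey : 1 ≤ |aeval (l⁻¹ : ℝ) R| * (C * (2 * l) ^ M) := by
    calc (1:ℝ) ≤ ∏ σ : ℚ⟮(l⁻¹ : ℝ)⟯ →ₐ[ℚ] ℂ, ‖σ A‖ := hprodA
      _ = ‖σ₀ A‖ * ∏ σ ∈ Finset.univ.erase σ₀, ‖σ A‖ := by
          rw [Finset.mul_prod_erase Finset.univ
            (fun σ : ℚ⟮(l⁻¹ : ℝ)⟯ →ₐ[ℚ] ℂ => ‖σ A‖) (Finset.mem_univ σ₀)]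
      _ ≤ |aeval (l⁻¹ : ℝ) R| * (C * (2 * l) ^ M) := by
          rw [hσ₀A]
          exact mul_le_mul_of_nonneg_left hrest (abs_nonneg _)
  -- identify the sum with the evaluation
  have hmain : ∑ k ∈ range (M+1), (ε k : ℝ) * l ^ k = aeval (l⁻¹ : ℝ) R * l ^ M := by
    rw [hev ℝ inferInstance inferInstance (l⁻¹ : ℝ), Finset.sum_mul]
    refine Finset.sum_congr rfl fun k hk => ?_
    have hkM : k ≤ M := by simp at hk; omega
    have hpow : (l⁻¹ : ℝ) ^ (M-k) * l ^ M = l ^ k := by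
      rw [inv_pow, inv_mul_eq_div, div_eq_iff (pow_ne_zero _ (ne_of_gt hlpos)), ← pow_add]
      congr 1
      omega
    rw [mul_assoc, hpow]
  rw [hmain, abs_mul, abs_pow, abs_of_pos hlpos]
  rw [div_le_iff₀ (mul_pos hC (by positivity))]
  calc (1:ℝ) ≤ |aeval (l⁻¹ : ℝ) R| * (C * (2 * l) ^ M) := hkey
    _ = |aeval (l⁻¹ : ℝ) R| * l ^ M * (C * 2 ^ M) := by
        rw [mul_pow]
        ring

/-- Garsia's separation lemma: If `λ ∈ (1/2, 1)` is the reciprocal of a Garsia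
number, then there is a constant `K > 0`, depending only on `λ`, such that for every `n` and
every pair of distinct words `(i₁,…,i_n), (i'₁,…,i'_n) ∈ {1,2}^n`
(encoded as `i, i' : Fin n → Fin 2`, letter `k` taking value `(i k : ℕ) + 1 ∈ {1, 2}`),
`|(1−λ) Σ_k i_k λ^{k−1} − (1−λ) Σ_k i'_k λ^{k−1}| > K / 2^n`. -/
theorem garsia_separation
    (l : ℝ) (hl : l ∈ Set.Ioo (1 / 2 : ℝ) 1) (hgarsia : IsGarsiaNumber l⁻¹) :
    ∃ K : ℝ, 0 < K ∧ ∀ n : ℕ, ∀ i i' : Fin n → Fin 2, i ≠ i' →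
      K / 2 ^ n <
        |(1 - l) * (∑ k : Fin n, (((i k : ℕ) + 1 : ℕ) : ℝ) * l ^ (k : ℕ)) -
         (1 - l) * (∑ k : Fin n, (((i' k : ℕ) + 1 : ℕ) : ℝ) * l ^ (k : ℕ))| := by
  classical
  obtain ⟨hl0, hl1⟩ := hl
  have hlpos : 0 < l := by linarith
  have h1l : 0 < 1 - l := by linarith
  obtain ⟨C, hC, hbound⟩ := garsia_aux l ⟨hl0, hl1⟩ hgarsia
  refine ⟨(1 - l) / C, div_pos h1l hC, ?_⟩
  intro n i i' hne
  set ε : ℕ → ℤ := fun k =>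
    if h : k < n then ((i ⟨k, h⟩ : ℕ) : ℤ) - ((i' ⟨k, h⟩ : ℕ) : ℤ) else 0 with hεdef
  have hεb : ∀ k, |ε k| ≤ 1 := by
    intro k
    by_cases h : k < n
    · simp only [hεdef, dif_pos h]
      have h1 := Fin.is_lt (i ⟨k, h⟩)
      have h2 := Fin.is_lt (i' ⟨k, h⟩)
      rw [abs_le]
      omega
    · simp [hεdef, dif_neg h]
  obtain ⟨k₀, hk₀⟩ := Function.ne_iff.mp hne
  have hvalne : ((i k₀ : ℕ) : ℤ) ≠ ((i' k₀ : ℕ) : ℤ) := by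
    intro h
    exact hk₀ (Fin.ext (by exact_mod_cast h))
  have hk₀ε : ε (k₀ : ℕ) ≠ 0 := by
    simp only [hεdef, dif_pos k₀.isLt, Fin.eta]
    omega
  set s : Finset ℕ := (range n).filter (fun k => ε k ≠ 0) with hsdef
  have hs_ne : s.Nonempty := ⟨k₀, by simp [hsdef, k₀.isLt, hk₀ε]⟩
  set M : ℕ := s.max' hs_ne with hMdef
  have hMs : M ∈ s := s.max'_mem hs_ne
  have hMn : M < n := by
    have := (Finset.mem_filter.mp hMs).1
    simpa using this
  have hMε : ε M ≠ 0 := (Finset.mem_filter.mp hMs).2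
  have hzero : ∀ k ∈ range n, k ∉ range (M+1) → (ε k : ℝ) * l ^ k = 0 := by
    intro k hk hk2
    have hkM : M < k := by simp at hk2; omega
    have : ε k = 0 := by
      by_contra h
      have : k ∈ s := Finset.mem_filter.mpr ⟨hk, h⟩
      exact absurd (s.le_max' k this) (by omega)
    rw [this]
    simp
  have hdiff : (1 - l) * (∑ k : Fin n, (((i k : ℕ) + 1 : ℕ) : ℝ) * l ^ (k : ℕ)) -
      (1 - l) * (∑ k : Fin n, (((i' k : ℕ) + 1 : ℕ) : ℝ) * l ^ (k : ℕ)) =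
      (1 - l) * (∑ k ∈ range (M+1), (ε k : ℝ) * l ^ k) := by
    rw [← mul_sub]
    congr 1
    rw [← Finset.sum_sub_distrib]
    rw [Finset.sum_subset (by intro k hk; simp at hk ⊢; omega :
      range (M+1) ⊆ range n) hzero]
    rw [← Fin.sum_univ_eq_sum_range (fun k => (ε k : ℝ) * l ^ k) n]
    refine Finset.sum_congr rfl fun k _ => ?_
    simp only [hεdef, dif_pos k.isLt, Fin.eta]
    push_cast
    ring
  rw [hdiff, abs_mul, abs_of_pos h1l]
  have hb := hbound M ε hεb hMε
  calc (1 - l) / C / 2 ^ n = (1 - l) / (C * 2 ^ n) := by ring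
    _ < (1 - l) / (C * 2 ^ M) := by
        apply div_lt_div_of_pos_left h1l (by positivity)
        have h2 : (2:ℝ) ^ M < 2 ^ n := by
          apply pow_lt_pow_right₀ (by norm_num) hMn
        exact mul_lt_mul_of_pos_left h2 hC
    _ = (1 - l) * (1 / (C * 2 ^ M)) := by ring
    _ ≤ (1 - l) * |∑ k ∈ range (M+1), (ε k : ℝ) * l ^ k| :=
        mul_le_mul_of_nonneg_left hb h1l.le
end

section
/- Let α > 1 and β ∈ (0, 1) be real numbers such that log α / log β is irrational. Then for every y ∈ (0, ∞) there exist sequences (m_k) in ℤ and (n_k) in ℕ with n_k → ∞ such that α^{m_k} β^{n_k} → y as k → ∞; in particular the set { α^m β^n : m ∈ ℤ, n ∈ ℕ } is dense in (0, ∞). -/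
open Filter

/-- Key approximation lemma: for `a > 0`, `b < 0` with `a / b` irrational, for every target `t`,
tolerance `ε > 0` and threshold `N`, there are `n ≥ N` in `ℕ` and `m : ℤ` with
`|m * a + n * b - t| < ε`. -/
lemma key_approx (a b : ℝ) (ha : 0 < a) (hb : b < 0) (hirr : Irrational (a / b))
    (t ε : ℝ) (hε : 0 < ε) (N : ℕ) :
    ∃ n : ℕ, N ≤ n ∧ ∃ m : ℤ, |(m : ℝ) * a + (n : ℝ) * b - t| < ε := by
  haveI : Fact (0 < a) := ⟨ha⟩
  -- the subgroup generated by `a` and `b` is dense in `ℝ`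
  set S : AddSubgroup ℝ := AddSubgroup.closure {a, b} with hS
  have haS : a ∈ S := AddSubgroup.subset_closure (by simp)
  have hbS : b ∈ S := AddSubgroup.subset_closure (by simp)
  have hdense : Dense (S : Set ℝ) := by
    rcases S.dense_or_cyclic with h | ⟨g, hg⟩
    · exact h
    · exfalso
      rw [hg] at haS hbS
      rcases AddSubgroup.mem_closure_singleton.mp haS with ⟨p, hp⟩
      rcases AddSubgroup.mem_closure_singleton.mp hbS with ⟨q, hq⟩
      have hgne : g ≠ 0 := by
        rintro rfl; simp at hq; exact absurd hq.symm (ne_of_lt hb)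
      have hqne : (q : ℝ) ≠ 0 := by
        rintro h; rw [← hq, zsmul_eq_mul, h, zero_mul] at hb; exact lt_irrefl 0 hb
      apply hirr
      refine ⟨(p : ℚ) / (q : ℚ), ?_⟩
      rw [← hp, ← hq]
      push_cast
      field_simp
      ring
  -- transfer to the circle `ℝ / aℤ`
  let π : ℝ → AddCircle a := QuotientAddGroup.mk
  have hπc : Continuous π := continuous_quotient_mk'
  have hπs : Function.Surjective π := Quotient.exists_rep
  have hπdr : DenseRange π := hπs.denseRange
  have hdense2 : Dense (π '' S) := hπdr.dense_image hπc hdense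
  -- the image lands in the closure of integer multiples of `π b`
  have himg : π '' (S : Set ℝ) ⊆ (AddSubgroup.zmultiples (π b) : Set (AddCircle a)) := by
    rintro _ ⟨s, hs, rfl⟩
    have : S ≤ (AddSubgroup.zmultiples (π b)).comap
        (QuotientAddGroup.mk' (AddSubgroup.zmultiples a)) := by
      rw [hS, AddSubgroup.closure_le]
      intro x hx
      rcases hx with h | h <;> rw [h] <;>
        simp only [SetLike.mem_coe, AddSubgroup.mem_comap, QuotientAddGroup.mk'_apply]
      · have : π a = 0 := (QuotientAddGroup.eq_zero_iff a).mpr (AddSubgroup.mem_zmultiples a)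
        show π a ∈ _
        rw [this]; exact zero_mem _
      · exact AddSubgroup.mem_zmultiples _
    exact this hs
  have hdense3 : Dense ((AddSubgroup.zmultiples (π b) : AddSubgroup (AddCircle a)) :
      Set (AddCircle a)) := hdense2.mono himg
  -- hence every point of the circle is a cluster point of `n • π b`, `n : ℕ`, `n → ∞`
  have hcl : MapClusterPt (π t) atTop (fun n : ℕ => n • (π b)) := by
    rw [mapClusterPt_atTop_nsmul_iff_mem_topologicalClosure_zmultiples]
    have : (AddSubgroup.zmultiples (π b)).topologicalClosure = ⊤ := by
      apply SetLike.coe_injective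
      exact hdense3.closure_eq
    rw [this]; trivial
  -- `π '' Ioo (t-ε) (t+ε)` is a neighborhood of `π t`
  have hU : π '' Set.Ioo (t - ε) (t + ε) ∈ nhds (π t) := by
    have hopen : IsOpen (π '' Set.Ioo (t - ε) (t + ε)) :=
      QuotientAddGroup.isOpenMap_coe _ isOpen_Ioo
    exact hopen.mem_nhds ⟨t, ⟨by linarith, by linarith⟩, rfl⟩
  have hfreq := (mapClusterPt_iff_frequently.mp hcl) _ hU
  rcases frequently_atTop.mp hfreq N with ⟨n, hnN, hn⟩
  refine ⟨n, hnN, ?_⟩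
  rcases hn with ⟨r, hr, hrn⟩
  -- lift back to `ℝ`
  have h1 : π r = π ((n : ℝ) * b) := by
    rw [hrn]
    show _ = QuotientAddGroup.mk _
    have : ((n : ℝ) * b) = (n : ℕ) • b := by simp
    rw [this]
    rfl
  have h2 : r - (n : ℝ) * b ∈ AddSubgroup.zmultiples a :=
    QuotientAddGroup.eq_iff_sub_mem.mp h1
  rcases h2 with ⟨m, hm⟩
  refine ⟨m, ?_⟩
  have hm' : (m : ℝ) * a = r - (n : ℝ) * b := by
    rw [← hm]; simp [zsmul_eq_mul]
  have heq : (m : ℝ) * a + (n : ℝ) * b - t = r - t := by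
    rw [hm']; ring
  rw [heq, abs_lt]
  exact ⟨by linarith [hr.1], by linarith [hr.2]⟩

/-- Let `α > 1` and `β ∈ (0,1)` with `log α / log β` irrational.  Then for every
`y ∈ (0, ∞)` there exist sequences `(m_k)` in `ℤ` and `(n_k)` in `ℕ` with `n_k → ∞` and
`α^{m_k} β^{n_k} → y`; in particular, `{ α^m β^n : m ∈ ℤ, n ∈ ℕ }` is dense in `(0, ∞)`. -/
theorem dense_alpha_beta_powers
    (α β : ℝ) (hα : 1 < α) (hβ : β ∈ Set.Ioo (0 : ℝ) 1)
    (hirr : Irrational (Real.log α / Real.log β)) :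
    (∀ y : ℝ, 0 < y → ∃ m : ℕ → ℤ, ∃ n : ℕ → ℕ,
      Tendsto n atTop atTop ∧
      Tendsto (fun k => α ^ m k * β ^ n k) atTop (nhds y)) ∧
    Set.Ioi (0 : ℝ) ⊆ closure {x : ℝ | ∃ m : ℤ, ∃ n : ℕ, x = α ^ m * β ^ n} := by
  obtain ⟨hβ0, hβ1⟩ := hβ
  have hα0 : (0 : ℝ) < α := lt_trans one_pos hα
  have ha : 0 < Real.log α := Real.log_pos hα
  have hb : Real.log β < 0 := Real.log_neg hβ0 hβ1
  set a := Real.log α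
  set b := Real.log β
  have main : ∀ y : ℝ, 0 < y → ∃ m : ℕ → ℤ, ∃ n : ℕ → ℕ,
      Tendsto n atTop atTop ∧
      Tendsto (fun k => α ^ m k * β ^ n k) atTop (nhds y) := by
    intro y hy
    set t := Real.log y
    have hchoice : ∀ k : ℕ, ∃ n : ℕ, k ≤ n ∧ ∃ m : ℤ,
        |(m : ℝ) * a + (n : ℝ) * b - t| < 1 / (k + 1) :=
      fun k => key_approx a b ha hb hirr t (1 / (k + 1)) (by positivity) k
    choose n hn m hm using hchoice
    refine ⟨m, n, ?_, ?_⟩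
    · exact tendsto_atTop_mono hn tendsto_id
    · -- `α ^ m k * β ^ n k = exp (m k * a + n k * b)`
      have heq : ∀ k, α ^ m k * β ^ n k = Real.exp ((m k : ℝ) * a + (n k : ℝ) * b) := by
        intro k
        have h1 : α ^ m k = Real.exp ((m k : ℝ) * a) := by
          rw [← Real.rpow_intCast α (m k), Real.rpow_def_of_pos hα0, mul_comm]
        have h2 : β ^ n k = Real.exp ((n k : ℝ) * b) := by
          rw [← Real.rpow_natCast β (n k), Real.rpow_def_of_pos hβ0, mul_comm]
        rw [h1, h2, ← Real.exp_add]
      have hlim : Tendsto (fun k => (m k : ℝ) * a + (n k : ℝ) * b) atTop (nhds t) := by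
        rw [tendsto_iff_dist_tendsto_zero]
        refine squeeze_zero (g := fun k : ℕ => 1 / ((k : ℝ) + 1)) (fun k => dist_nonneg)
          (fun k => le_of_lt (by simpa [Real.dist_eq] using hm k))
          tendsto_one_div_add_atTop_nhds_zero_nat
      have := (Real.continuous_exp.continuousAt (x := t)).tendsto.comp hlim
      rw [Real.exp_log hy] at this
      simpa [heq, Function.comp_def] using this
  refine ⟨main, ?_⟩
  intro y hy
  rcases main y hy with ⟨m, n, -, hlim⟩
  exact mem_closure_of_tendsto hlim (Eventually.of_forall fun k => ⟨m k, n k, rfl⟩)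
end

section
/- Let α > 1 and β ∈ (0, 1) be real numbers such that log α / log β is irrational. Then the set E = { (2 − α^m β^n − β^n) / (2 + α^m β^n − β^n) : m ∈ ℤ, n ∈ ℕ } is dense in (−1, 1). -/
/-- Stepping lemma: if we can step up by `e ∈ (0, ε)` starting at `s ≤ r`,
we can land within `ε` of `r`. -/
lemma step_lemma (s r ε e : ℝ) (hε : 0 < ε) (he : 0 < e) (hee : e < ε) (hs : s ≤ r) :
    ∃ t : ℕ, |s + t * e - r| < ε := by
  have hP : ∃ t : ℕ, r - ε < s + t * e := by
    obtain ⟨t, ht⟩ := exists_nat_gt ((r - ε - s) / e)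
    refine ⟨t, ?_⟩
    have := (div_lt_iff₀ he).mp ht
    linarith
  classical
  set t0 := Nat.find hP with ht0
  have hfind := Nat.find_spec hP
  rcases Nat.eq_zero_or_pos t0 with h0 | hpos
  · refine ⟨0, ?_⟩
    rw [← ht0, h0] at hfind
    simp only [Nat.cast_zero, zero_mul, add_zero] at hfind ⊢
    rw [abs_lt]
    constructor <;> linarith
  · refine ⟨t0, ?_⟩
    have hprev : ¬ (r - ε < s + (↑(t0 - 1) : ℝ) * e) := Nat.find_min hP (by omega)
    push_neg at hprev
    have hcast : ((t0 - 1 : ℕ) : ℝ) = (t0 : ℝ) - 1 := by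
      have : (1 : ℕ) ≤ t0 := hpos
      push_cast [Nat.cast_sub this]
      ring
    rw [hcast] at hprev
    rw [abs_lt]
    constructor
    · linarith
    · nlinarith

/-- Key density lemma: for `a > 0`, `b < 0` with `b/a` irrational, the numbers
`m*a + n*b` with `m : ℤ` and `n : ℕ`, `n ≥ N`, come within `ε` of any real `r`. -/
lemma key_lemma (a b : ℝ) (ha : 0 < a) (hb : b < 0) (hirr : Irrational (b / a))
    (r ε : ℝ) (hε : 0 < ε) (N : ℕ) :
    ∃ m : ℤ, ∃ n : ℕ, N ≤ n ∧ |(m : ℝ) * a + (n : ℝ) * b - r| < ε := by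
  -- find a small nonzero element e = k*b - j*a with k ≥ 1
  obtain ⟨M, hM⟩ := exists_nat_gt (a / ε)
  have hM0 : 0 < M := by
    by_contra h
    push_neg at h
    interval_cases M
    simp only [Nat.cast_zero] at hM
    have : 0 < a / ε := div_pos ha hε
    linarith
  obtain ⟨k, hk0, hkM, hk⟩ := Real.exists_nat_abs_mul_sub_round_le (b / a) hM0
  set j : ℤ := round ((k : ℝ) * (b / a)) with hj
  set e : ℝ := (k : ℝ) * b - (j : ℝ) * a with hedef
  have hane : a ≠ 0 := ha.ne'
  have he_eq : e = a * ((k : ℝ) * (b / a) - (j : ℝ)) := by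
    field_simp [hedef]
    ring
  have habs : |e| < ε := by
    rw [he_eq, abs_mul, abs_of_pos ha]
    have h1 : a * |(k : ℝ) * (b / a) - (j : ℝ)| ≤ a * (1 / (M + 1)) :=
      mul_le_mul_of_nonneg_left hk ha.le
    have h2 : a * (1 / (M + 1)) < ε := by
      rw [div_lt_iff₀ hε] at hM
      rw [mul_one_div, div_lt_iff₀ (by positivity : (0:ℝ) < (M:ℝ) + 1)]
      nlinarith
    linarith
  have hene : e ≠ 0 := by
    rw [he_eq]
    apply mul_ne_zero hane
    have : Irrational ((k : ℝ) * (b / a)) := hirr.natCast_mul hk0.ne'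
    exact sub_ne_zero_of_ne (this.ne_int j)
  rcases lt_or_gt_of_ne hene with heneg | hepos
  · -- e < 0 : step downwards from above r
    set m1 : ℤ := ⌈(r - (N : ℝ) * b) / a⌉ with hm1
    set s : ℝ := (m1 : ℝ) * a + (N : ℝ) * b with hsdef
    have hsr : r ≤ s := by
      have h1 : (r - (N : ℝ) * b) / a ≤ (m1 : ℝ) := Int.le_ceil _
      have h2 : r - (N : ℝ) * b ≤ (m1 : ℝ) * a := by
        rw [div_le_iff₀ ha] at h1
        linarith
      linarith [h2]
    have hee' : -e < ε := by
      have := abs_lt.mp habs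
      linarith [this.1]
    obtain ⟨t, ht⟩ := step_lemma (-s) (-r) ε (-e) hε (by linarith) hee' (by linarith)
    refine ⟨m1 - t * j, N + t * k, le_add_right le_rfl, ?_⟩
    have heq : ((m1 - t * j : ℤ) : ℝ) * a + ((N + t * k : ℕ) : ℝ) * b - r
        = -(-s + (t : ℝ) * (-e) - (-r)) := by
      push_cast
      rw [hsdef, hedef]
      ring
    rw [heq, abs_neg]
    exact ht
  · -- e > 0 : step upwards from below r
    set m1 : ℤ := ⌊(r - (N : ℝ) * b) / a⌋ with hm1
    set s : ℝ := (m1 : ℝ) * a + (N : ℝ) * b with hsdef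
    have hsr : s ≤ r := by
      have h1 : (m1 : ℝ) ≤ (r - (N : ℝ) * b) / a := Int.floor_le _
      have h2 : (m1 : ℝ) * a ≤ r - (N : ℝ) * b := by
        rw [le_div_iff₀ ha] at h1
        linarith
      linarith [h2]
    have hee' : e < ε := by
      have := abs_lt.mp habs
      linarith [this.2]
    obtain ⟨t, ht⟩ := step_lemma s r ε e hε hepos hee' hsr
    refine ⟨m1 - t * j, N + t * k, le_add_right le_rfl, ?_⟩
    have heq : ((m1 - t * j : ℤ) : ℝ) * a + ((N + t * k : ℕ) : ℝ) * b - r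
        = s + (t : ℝ) * e - r := by
      push_cast
      rw [hsdef, hedef]
      ring
    rw [heq]
    exact ht

/-- Let `α > 1` and `β ∈ (0,1)` with `log α / log β` irrational.  Then the set
`E = { (2 − α^m β^n − β^n) / (2 + α^m β^n − β^n) : m ∈ ℤ, n ∈ ℕ }` is dense in `(−1, 1)`. -/
theorem dense_orbital_set
    (α β : ℝ) (hα : 1 < α) (hβ : β ∈ Set.Ioo (0 : ℝ) 1)
    (hirr : Irrational (Real.log α / Real.log β)) :
    Set.Ioo (-1 : ℝ) 1 ⊆ closure
      {x : ℝ | ∃ m : ℤ, ∃ n : ℕ,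
        x = (2 - α ^ m * β ^ n - β ^ n) / (2 + α ^ m * β ^ n - β ^ n)} := by
  intro y hy
  obtain ⟨hy1, hy2⟩ := hy
  have hβ0 : (0 : ℝ) < β := hβ.1
  have hβ1 : β < 1 := hβ.2
  have hα0 : (0 : ℝ) < α := lt_trans one_pos hα
  have ha : 0 < Real.log α := Real.log_pos hα
  have hb : Real.log β < 0 := Real.log_neg hβ0 hβ1
  have hirr' : Irrational (Real.log β / Real.log α) := by
    have := hirr.inv
    rwa [inv_div] at this
  have h1y : (0 : ℝ) < 1 + y := by linarith
  have h1y' : (0 : ℝ) < 1 - y := by linarith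
  set v0 : ℝ := 2 * (1 - y) / (1 + y) with hv0
  have hv0pos : 0 < v0 := by positivity
  set w0 : ℝ := Real.log v0 with hw0
  rw [Metric.mem_closure_iff]
  intro ε hε
  -- continuity of F p = (2 - exp p.1 - p.2)/(2 + exp p.1 - p.2) at (w0, 0)
  have hexpw0 : Real.exp w0 = v0 := Real.exp_log hv0pos
  have hden : (2 : ℝ) + Real.exp w0 - 0 ≠ 0 := by
    have := Real.exp_pos w0
    intro h; linarith
  have hF : ContinuousAt
      (fun p : ℝ × ℝ => (2 - Real.exp p.1 - p.2) / (2 + Real.exp p.1 - p.2)) ((w0, 0) : ℝ × ℝ) := by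
    apply ContinuousAt.div
    · fun_prop
    · fun_prop
    · exact hden
  have hFval : (2 - Real.exp w0 - 0) / (2 + Real.exp w0 - 0) = y := by
    rw [hexpw0, hv0]
    field_simp
    ring
  obtain ⟨δ, hδ0, hδ⟩ := Metric.continuousAt_iff.mp hF ε hε
  obtain ⟨N, hN⟩ := exists_pow_lt_of_lt_one hδ0 hβ1
  obtain ⟨m, n, hnN, hmn⟩ :=
    key_lemma (Real.log α) (Real.log β) ha hb hirr' w0 δ hδ0 N
  refine ⟨(2 - α ^ m * β ^ n - β ^ n) / (2 + α ^ m * β ^ n - β ^ n), ⟨m, n, rfl⟩, ?_⟩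
  have hβn_pos : (0 : ℝ) < β ^ n := pow_pos hβ0 n
  have hβn_lt : β ^ n < δ := by
    calc β ^ n ≤ β ^ N := pow_le_pow_of_le_one hβ0.le hβ1.le hnN
    _ < δ := hN
  have hexp : Real.exp ((m : ℝ) * Real.log α + (n : ℝ) * Real.log β) = α ^ m * β ^ n := by
    rw [Real.exp_add]
    congr 1
    · rw [← Real.log_zpow, Real.exp_log (zpow_pos hα0 m)]
    · rw [← Real.log_pow, Real.exp_log hβn_pos]
  have hdist : dist (((m : ℝ) * Real.log α + (n : ℝ) * Real.log β, β ^ n) : ℝ × ℝ)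
      ((w0, 0) : ℝ × ℝ) < δ := by
    rw [Prod.dist_eq]
    apply max_lt
    · rw [Real.dist_eq]
      exact hmn
    · rw [Real.dist_eq, sub_zero, abs_of_pos hβn_pos]
      exact hβn_lt
  have hclose := hδ hdist
  simp only [hexp, hFval] at hclose
  rw [dist_comm]
  exact hclose
end
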